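/- For (x,y) in the local region N₂ and 0 < r < 1 one has the bound |∂_r M_r(x,y)| ≤ C_d (1−r)^{−d/2−1} exp(−|x−y|²/(4(1−r))); consequently ∫_0^1 |∂_r M_r(x,y)| dr ≤ C_d |x−y|^{−d} for (x,y) ∈ N₂ with x ≠ y. -/

import Mathlib

open Real MeasureTheory Set


lemma aux_vexp (v : ℝ) (hv : 0 ≤ v) : v * Real.exp (-v) ≤ 1 := by
  have h1 : v ≤ Real.exp v := by linarith [Real.add_one_le_exp v]
  have h2 : Real.exp v * Real.exp (-v) = 1 := by
    rw [← Real.exp_add]; simp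
  nlinarith [Real.exp_pos (-v), Real.exp_pos v]

lemma aux_exp2 : Real.exp 2 ≤ 8 := by
  have h : Real.exp 2 = Real.exp 1 * Real.exp 1 := by
    rw [← Real.exp_add]; norm_num
  nlinarith [Real.exp_one_lt_d9, Real.exp_pos 1]

lemma aux_sup (n : ℕ) (e : ℝ) (he : 0 ≤ e) (hen : e ≤ n) (v : ℝ) (hv : 0 ≤ v) :
    v ^ e * Real.exp (-v) ≤ (Nat.factorial n : ℝ) + 1 := by
  have hfac : (1:ℝ) ≤ (Nat.factorial n : ℝ) := by exact_mod_cast Nat.one_le_iff_ne_zero.mpr n.factorial_ne_zero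
  rcases le_or_gt v 1 with h1 | h1
  · have h2 : v ^ e ≤ 1 := Real.rpow_le_one hv h1 he
    have h3 : Real.exp (-v) ≤ 1 := by
      rw [← Real.exp_zero]; exact Real.exp_le_exp.2 (by linarith)
    nlinarith [Real.exp_pos (-v), Real.rpow_nonneg hv e]
  · have h2 : v ^ e ≤ v ^ (n:ℕ) := by
      rw [← Real.rpow_natCast v n]
      exact Real.rpow_le_rpow_of_exponent_le h1.le hen
    have hfp : (0:ℝ) < (Nat.factorial n : ℝ) := by linarith
    have h4 := Real.pow_div_factorial_le_exp (x := v) hv n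
    rw [div_le_iff₀ hfp] at h4
    have h5 : Real.exp v * Real.exp (-v) = 1 := by rw [← Real.exp_add]; simp
    have h6 : v ^ (n:ℕ) * Real.exp (-v) ≤ (Nat.factorial n : ℝ) := by
      nlinarith [Real.exp_pos (-v), Real.exp_pos v]
    nlinarith [Real.exp_pos (-v)]

set_option maxHeartbeats 4000000 in
lemma aux_core (d : ℕ) (A B u b r : ℝ) (hA : 0 ≤ A) (hB : 0 ≤ B)
    (hu : 0 ≤ u) (hb : |b| ≤ A * B) (huu : u ^ 2 = A ^ 2 - 2 * b + B ^ 2)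
    (hloc : u * (1 + A + B) ≤ 2) (hr0 : 0 < r) (hr1 : r < 1) :
    ((d:ℝ) / (1 - r) + 2 * u ^ 2 / (1 - r) ^ 2 + 2 * A ^ 2 + 4) *
      Real.exp (-((r ^ 2 * A ^ 2 - 2 * (r * b) + B ^ 2) / (1 - r ^ 2)))
    ≤ 700 * ((d:ℝ) + 1) / (1 - r) * Real.exp (-u ^ 2 / (4 * (1 - r))) := by
  have ht : 0 < 1 - r := by linarith
  have hS : 0 < 1 - r ^ 2 := by nlinarith
  have htS : 1 - r ≤ 1 - r ^ 2 := by nlinarith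
  have hS2 : 1 - r ^ 2 ≤ 2 * (1 - r) := by nlinarith
  have hAu : A * u ≤ 2 := by nlinarith [mul_nonneg hu hB, mul_nonneg hu hA, hu]
  have hb2 : b ^ 2 ≤ A ^ 2 * B ^ 2 := by
    nlinarith [abs_nonneg b, sq_abs b, mul_nonneg hA hB]
  have hCS : A ^ 2 - b ≤ A * u := by
    nlinarith [mul_nonneg hA hu, sq_nonneg (A*u + (A^2 - b)), sq_nonneg (A*u - (A^2 - b))]
  have hN0 : 0 ≤ r ^ 2 * A ^ 2 - 2 * (r * b) + B ^ 2 := by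
    nlinarith [sq_nonneg (r * A - B), mul_le_mul_of_nonneg_left hb hr0.le, le_abs_self b]
  set N := r ^ 2 * A ^ 2 - 2 * (r * b) + B ^ 2 with hN_def
  set q := N / (1 - r ^ 2) with hq_def
  clear_value N q
  have hq0 : 0 ≤ q := by rw [hq_def]; exact div_nonneg hN0 hS.le
  have hNid : N = u ^ 2 - 2 * (1 - r) * (A ^ 2 - b) + (1 - r) ^ 2 * A ^ 2 := by
    rw [hN_def, huu]; ring
  have hq1 : u ^ 2 / (2 * (1 - r)) - 2 ≤ q := by
    have hnum : u ^ 2 - 2 * (1 - r) * (A * u) ≤ N := by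
      nlinarith [mul_le_mul_of_nonneg_left hCS (by linarith : (0:ℝ) ≤ 2 * (1 - r)),
        sq_nonneg ((1 - r) * A)]
    rcases le_or_gt (u ^ 2 - 2 * (1 - r) * (A * u)) 0 with hc | hc
    · have h1 : u ^ 2 / (2 * (1 - r)) ≤ A * u := by
        rw [div_le_iff₀ (by positivity)]; nlinarith
      linarith
    · have h1 : (u ^ 2 - 2 * (1 - r) * (A * u)) / (1 - r ^ 2) ≤ q := by
        rw [hq_def]; gcongr
      have h2 : (u ^ 2 - 2 * (1 - r) * (A * u)) / (2 * (1 - r)) ≤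
          (u ^ 2 - 2 * (1 - r) * (A * u)) / (1 - r ^ 2) := by
        gcongr
        all_goals first | exact hS | exact hc.le | linarith
      have h3 : (u ^ 2 - 2 * (1 - r) * (A * u)) / (2 * (1 - r)) =
          u ^ 2 / (2 * (1 - r)) - A * u := by
        field_simp <;> ring
      linarith
  set e4 := Real.exp (-u ^ 2 / (4 * (1 - r))) with he4_def
  clear_value e4
  have he4pos : 0 < e4 := he4_def ▸ Real.exp_pos _
  have he4exp : e4 = Real.exp (-(u ^ 2 / (4 * (1 - r)))) := by rw [he4_def, neg_div]
  have he4le : e4 ≤ 1 := by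
    rw [he4exp]
    calc Real.exp (-(u ^ 2 / (4 * (1 - r)))) ≤ Real.exp 0 := by
          apply Real.exp_le_exp.2
          rw [neg_nonpos]
          exact div_nonneg (sq_nonneg u) (by linarith)
      _ = 1 := Real.exp_zero
  have hE1 : Real.exp (-q) ≤ 8 * (e4 * e4) := by
    have h1 : Real.exp (-q) ≤ Real.exp (2 - u ^ 2 / (2 * (1 - r))) :=
      Real.exp_le_exp.2 (by linarith)
    have h2 : 2 - u ^ 2 / (2 * (1 - r)) = 2 + (-(u ^ 2 / (4 * (1 - r))) + -(u ^ 2 / (4 * (1 - r)))) := by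
      field_simp <;> ring
    rw [h2, Real.exp_add, Real.exp_add, ← he4exp] at h1
    have h3 := mul_le_mul_of_nonneg_right aux_exp2 (mul_nonneg he4pos.le he4pos.le)
    linarith
  have hE8 : Real.exp (-q) ≤ 8 * e4 := by
    have h8 := mul_le_mul_of_nonneg_left he4le (by positivity : (0:ℝ) ≤ 8 * e4)
    have h9 : 8 * e4 * e4 ≤ 8 * e4 := by linarith
    nlinarith [hE1]
  have hT1 : (d:ℝ) / (1 - r) * Real.exp (-q) ≤ 8 * (d:ℝ) * (e4 / (1 - r)) := by
    have h0 : (0:ℝ) ≤ (d:ℝ) / (1 - r) := div_nonneg (Nat.cast_nonneg d) ht.le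
    calc (d:ℝ) / (1 - r) * Real.exp (-q) ≤ (d:ℝ) / (1 - r) * (8 * e4) :=
          mul_le_mul_of_nonneg_left hE8 h0
      _ = 8 * (d:ℝ) * (e4 / (1 - r)) := by ring
  have hv1 : u ^ 2 / (4 * (1 - r)) * e4 ≤ 1 := by
    rw [he4exp]
    exact aux_vexp _ (div_nonneg (sq_nonneg u) (by linarith))
  have hT2core : 2 * u ^ 2 / (1 - r) ^ 2 * e4 ≤ 8 / (1 - r) := by
    have h1 : 2 * u ^ 2 / (1 - r) ^ 2 * e4 = 8 / (1 - r) * (u ^ 2 / (4 * (1 - r)) * e4) := by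
      field_simp <;> ring
    rw [h1]
    have h2 : (0:ℝ) ≤ 8 / (1 - r) := div_nonneg (by norm_num) ht.le
    nlinarith
  have hT2 : 2 * u ^ 2 / (1 - r) ^ 2 * Real.exp (-q) ≤ 64 * (e4 / (1 - r)) := by
    calc 2 * u ^ 2 / (1 - r) ^ 2 * Real.exp (-q)
        ≤ 2 * u ^ 2 / (1 - r) ^ 2 * (8 * (e4 * e4)) :=
          mul_le_mul_of_nonneg_left hE1 (by positivity)
      _ = 8 * (2 * u ^ 2 / (1 - r) ^ 2 * e4) * e4 := by ring
      _ ≤ 8 * (8 / (1 - r)) * e4 := by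
          apply mul_le_mul_of_nonneg_right _ he4pos.le
          nlinarith
      _ = 64 * (e4 / (1 - r)) := by ring
  have hT3 : (2 * A ^ 2 + 4) * Real.exp (-q) ≤ 544 * (e4 / (1 - r)) := by
    rcases le_or_gt ((1 - r) * A) (2 * u) with hc | hc
    · have hA2 : (1 - r) * A ^ 2 ≤ 4 := by
        nlinarith [mul_le_mul_of_nonneg_left hc hA]
      have h1 : 2 * A ^ 2 + 4 ≤ 12 / (1 - r) := by
        rw [le_div_iff₀ ht]
        nlinarith
      have h2 : (12 / (1 - r)) * (8 * e4) = 96 * (e4 / (1 - r)) := by ring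
      calc (2 * A ^ 2 + 4) * Real.exp (-q) ≤ (12 / (1 - r)) * (8 * e4) :=
            mul_le_mul h1 hE8 (Real.exp_pos _).le (div_nonneg (by norm_num) ht.le)
        _ = 96 * (e4 / (1 - r)) := h2
        _ ≤ 544 * (e4 / (1 - r)) := by
            apply mul_le_mul_of_nonneg_right (by norm_num) (div_nonneg he4pos.le ht.le)
    · have hq2 : ((1 - r) * A - u) ^ 2 / (2 * (1 - r)) ≤ q := by
        have hnum : ((1 - r) * A - u) ^ 2 ≤ N := by
          nlinarith [mul_le_mul_of_nonneg_left hCS (by linarith : (0:ℝ) ≤ 2 * (1 - r))]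
        have h1 : ((1 - r) * A - u) ^ 2 / (1 - r ^ 2) ≤ q := by
          rw [hq_def]; gcongr
        have h2 : ((1 - r) * A - u) ^ 2 / (2 * (1 - r)) ≤ ((1 - r) * A - u) ^ 2 / (1 - r ^ 2) := by
          gcongr
          all_goals first | exact hS | exact sq_nonneg _ | linarith
        linarith
      have hw : (1 - r) * A ^ 2 / 8 ≤ ((1 - r) * A - u) ^ 2 / (2 * (1 - r)) := by
        rw [div_le_div_iff₀ (by norm_num) (by positivity)]
        nlinarith [mul_nonneg (by linarith : (0:ℝ) ≤ (1-r)*A - 2*u)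
          (by linarith : (0:ℝ) ≤ (1-r)*A - 2*u/3)]
      have hq3 : 3 / 4 * (u ^ 2 / (2 * (1 - r))) - 3 / 2 + (1 - r) * A ^ 2 / 32 ≤ q := by
        linarith
      set z := (1 - r) * A ^ 2 / 32 with hz_def
      clear_value z
      have hz0 : 0 ≤ z := by rw [hz_def]; exact div_nonneg (mul_nonneg ht.le (sq_nonneg A)) (by norm_num)
      have hEz : Real.exp (-q) ≤ 8 * e4 * Real.exp (-z) := by
        have h34 : 3 / 4 * (u ^ 2 / (2 * (1 - r))) - u ^ 2 / (4 * (1 - r)) = u ^ 2 / (8 * (1 - r)) := by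
          field_simp <;> ring
        have h1 : Real.exp (-q) ≤ Real.exp (2 + (-(u ^ 2 / (4 * (1 - r))) + -z)) := by
          apply Real.exp_le_exp.2
          have hpos : 0 ≤ u ^ 2 / (8 * (1 - r)) := by positivity
          linarith
        rw [Real.exp_add, Real.exp_add, ← he4exp] at h1
        have h5 := mul_le_mul_of_nonneg_right aux_exp2
          (mul_nonneg he4pos.le (Real.exp_pos (-z)).le)
        calc Real.exp (-q) ≤ Real.exp 2 * (e4 * Real.exp (-z)) := h1
          _ ≤ 8 * e4 * Real.exp (-z) := by nlinarith [h5]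
      have hzexp : z * Real.exp (-z) ≤ 1 := aux_vexp z hz0
      have hEz1 : Real.exp (-z) ≤ 1 := by
        calc Real.exp (-z) ≤ Real.exp 0 := Real.exp_le_exp.2 (by linarith)
          _ = 1 := Real.exp_zero
      have h2 : (2 * A ^ 2 + 4) * Real.exp (-z) ≤ 68 / (1 - r) := by
        have hzA : 2 * A ^ 2 = 64 * z / (1 - r) := by
          rw [hz_def]; field_simp <;> ring
        have h3 : 2 * A ^ 2 * Real.exp (-z) ≤ 64 / (1 - r) := by
          rw [hzA]
          calc 64 * z / (1 - r) * Real.exp (-z) = 64 / (1 - r) * (z * Real.exp (-z)) := by ring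
            _ ≤ 64 / (1 - r) * 1 := mul_le_mul_of_nonneg_left hzexp (div_nonneg (by norm_num) ht.le)
            _ = 64 / (1 - r) := by ring
        have h4 : 4 * Real.exp (-z) ≤ 4 / (1 - r) := by
          rw [le_div_iff₀ ht]
          nlinarith [Real.exp_pos (-z)]
        have hdist : (2 * A ^ 2 + 4) * Real.exp (-z)
            = 2 * A ^ 2 * Real.exp (-z) + 4 * Real.exp (-z) := by ring
        rw [hdist]
        have h5 : 64 / (1 - r) + 4 / (1 - r) = 68 / (1 - r) := by
          rw [← add_div]; norm_num
        linarith
      calc (2 * A ^ 2 + 4) * Real.exp (-q) ≤ (2 * A ^ 2 + 4) * (8 * e4 * Real.exp (-z)) :=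
            mul_le_mul_of_nonneg_left hEz (by nlinarith [sq_nonneg A])
        _ = 8 * e4 * ((2 * A ^ 2 + 4) * Real.exp (-z)) := by ring
        _ ≤ 8 * e4 * (68 / (1 - r)) :=
            mul_le_mul_of_nonneg_left h2 (by nlinarith [he4pos])
        _ = 544 * (e4 / (1 - r)) := by ring
  have hsum : ((d:ℝ) / (1 - r) + 2 * u ^ 2 / (1 - r) ^ 2 + 2 * A ^ 2 + 4) * Real.exp (-q)
      = (d:ℝ) / (1 - r) * Real.exp (-q) + 2 * u ^ 2 / (1 - r) ^ 2 * Real.exp (-q)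
        + (2 * A ^ 2 + 4) * Real.exp (-q) := by ring
  have hfin : (8 * (d:ℝ) + 608) * (e4 / (1 - r)) ≤ 700 * ((d:ℝ) + 1) / (1 - r) * e4 := by
    have h1 : 700 * ((d:ℝ) + 1) / (1 - r) * e4 = (700 * (d:ℝ) + 700) * (e4 / (1 - r)) := by
      ring
    rw [h1]
    apply mul_le_mul_of_nonneg_right _ (div_nonneg he4pos.le ht.le)
    have : (0:ℝ) ≤ (d:ℝ) := Nat.cast_nonneg d
    linarith
  rw [hsum]
  linarith [hT1, hT2, hT3, hfin]

lemma aux_key (d : ℕ) (x y : EuclideanSpace ℝ (Fin d)) (s : ℝ) :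
    ‖s • x - y‖ ^ 2 = s ^ 2 * ‖x‖ ^ 2 - 2 * (s * (inner ℝ x y : ℝ)) + ‖y‖ ^ 2 := by
  have h1 : ‖s • x‖ ^ 2 = s ^ 2 * ‖x‖ ^ 2 := by
    rw [norm_smul, Real.norm_eq_abs, mul_pow, sq_abs]
  rw [norm_sub_sq_real, h1, real_inner_smul_left]

set_option maxHeartbeats 1000000 in
lemma aux_deriv (d : ℕ) (x y : EuclideanSpace ℝ (Fin d)) (r : ℝ) (hr0 : 0 < r) (hr1 : r < 1) :
    HasDerivAt (fun s : ℝ => Real.pi ^ (-(d : ℝ) / 2) * (1 - s ^ 2) ^ (-(d : ℝ) / 2) *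
        Real.exp (-‖s • x - y‖ ^ 2 / (1 - s ^ 2)))
      (Real.pi ^ (-(d:ℝ)/2) * (1 - r ^ 2) ^ (-(d:ℝ)/2) *
        (((d:ℝ) * r / (1 - r ^ 2) -
            2 * (r * ‖x - y‖ ^ 2 - (inner ℝ x y : ℝ) * (1 - r) ^ 2) / (1 - r ^ 2) ^ 2) *
          Real.exp (-((r ^ 2 * ‖x‖ ^ 2 - 2 * (r * (inner ℝ x y : ℝ)) + ‖y‖ ^ 2) / (1 - r ^ 2))))) r := by
  have hS : 0 < 1 - r ^ 2 := by nlinarith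
  have h1 : HasDerivAt (fun s : ℝ => 1 - s ^ 2) (-(2 * r)) r := by
    simpa using (hasDerivAt_pow 2 r).const_sub 1
  have h2 := h1.rpow_const (p := -(d:ℝ)/2) (Or.inl hS.ne')
  have h3 := h2.const_mul (Real.pi ^ (-(d:ℝ)/2))
  have hN : HasDerivAt (fun s : ℝ => s ^ 2 * ‖x‖ ^ 2 - 2 * (s * (inner ℝ x y : ℝ)) + ‖y‖ ^ 2)
      (2 * r * ‖x‖ ^ 2 - 2 * (inner ℝ x y : ℝ)) r := by
    have := (((hasDerivAt_pow 2 r).mul_const (‖x‖ ^ 2)).sub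
      (((hasDerivAt_id r).mul_const ((inner ℝ x y : ℝ))).const_mul 2)).add_const (‖y‖ ^ 2)
    refine this.congr_deriv ?_
    push_cast
    ring
  have hq := (hN.div h1 hS.ne').neg
  have hE := hq.exp
  have hmul := h3.mul hE
  have hfun : (fun s : ℝ => Real.pi ^ (-(d : ℝ) / 2) * (1 - s ^ 2) ^ (-(d : ℝ) / 2) *
      Real.exp (-‖s • x - y‖ ^ 2 / (1 - s ^ 2)))
      = fun s : ℝ => Real.pi ^ (-(d : ℝ) / 2) * (1 - s ^ 2) ^ (-(d : ℝ) / 2) *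
        Real.exp (-((s ^ 2 * ‖x‖ ^ 2 - 2 * (s * (inner ℝ x y : ℝ)) + ‖y‖ ^ 2) / (1 - s ^ 2))) := by
    funext s
    rw [aux_key d x y s, neg_div (1 - s ^ 2) (s ^ 2 * ‖x‖ ^ 2 - 2 * (s * (inner ℝ x y : ℝ)) + ‖y‖ ^ 2)]
  rw [hfun]
  refine hmul.congr_deriv ?_
  simp only [Pi.neg_apply, Pi.div_apply]
  have huu : ‖x - y‖ ^ 2 = ‖x‖ ^ 2 - 2 * (inner ℝ x y : ℝ) + ‖y‖ ^ 2 := norm_sub_sq_real x y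
  rw [huu, Real.rpow_sub hS, Real.rpow_one]
  field_simp
  ring

set_option maxHeartbeats 1000000 in
lemma aux_point (d : ℕ) (x y : EuclideanSpace ℝ (Fin d))
    (hxy : ‖x - y‖ ≤ 2 / (1 + ‖x‖ + ‖y‖)) (r : ℝ) (hr0 : 0 < r) (hr1 : r < 1) :
    |deriv (fun s : ℝ => Real.pi ^ (-(d : ℝ) / 2) * (1 - s ^ 2) ^ (-(d : ℝ) / 2) *
        Real.exp (-‖s • x - y‖ ^ 2 / (1 - s ^ 2))) r|
    ≤ 700 * ((d:ℝ) + 1) * (1 - r) ^ (-(d : ℝ) / 2 - 1) *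
        Real.exp (-‖x - y‖ ^ 2 / (4 * (1 - r))) := by
  have ht : 0 < 1 - r := by linarith
  have hS : 0 < 1 - r ^ 2 := by nlinarith
  have htS : 1 - r ≤ 1 - r ^ 2 := by nlinarith
  have hA : (0:ℝ) ≤ ‖x‖ := norm_nonneg x
  have hB : (0:ℝ) ≤ ‖y‖ := norm_nonneg y
  have hu : (0:ℝ) ≤ ‖x - y‖ := norm_nonneg _
  have hbB : |(inner ℝ x y : ℝ)| ≤ ‖x‖ * ‖y‖ := abs_real_inner_le_norm x y
  have huu : ‖x - y‖ ^ 2 = ‖x‖ ^ 2 - 2 * (inner ℝ x y : ℝ) + ‖y‖ ^ 2 := norm_sub_sq_real x y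
  have hD : (0:ℝ) < 1 + ‖x‖ + ‖y‖ := by linarith
  have hloc : ‖x - y‖ * (1 + ‖x‖ + ‖y‖) ≤ 2 := by
    rw [← le_div_iff₀ hD]; exact hxy
  have hAu : ‖x‖ * ‖x - y‖ ≤ 2 := by nlinarith [mul_nonneg hu hB, mul_nonneg hu hA]
  have hBA : ‖y‖ ≤ ‖x‖ + ‖x - y‖ := by
    have h1 := norm_sub_norm_le y x
    have h2 : ‖y - x‖ = ‖x - y‖ := norm_sub_rev y x
    linarith
  rw [(aux_deriv d x y r hr0 hr1).deriv]
  set b := (inner ℝ x y : ℝ) with hb_def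
  set E := Real.exp (-((r ^ 2 * ‖x‖ ^ 2 - 2 * (r * b) + ‖y‖ ^ 2) / (1 - r ^ 2))) with hE_def
  have hEpos : 0 < E := hE_def ▸ Real.exp_pos _
  set G := (d:ℝ) * r / (1 - r ^ 2) -
      2 * (r * ‖x - y‖ ^ 2 - b * (1 - r) ^ 2) / (1 - r ^ 2) ^ 2 with hG_def
  -- abs computation
  have habs : |Real.pi ^ (-(d:ℝ)/2) * (1 - r ^ 2) ^ (-(d:ℝ)/2) * (G * E)|
      = Real.pi ^ (-(d:ℝ)/2) * (1 - r ^ 2) ^ (-(d:ℝ)/2) * (|G| * E) := by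
    rw [abs_mul, abs_mul, abs_mul]
    rw [abs_of_pos (Real.rpow_pos_of_pos Real.pi_pos _),
      abs_of_pos (Real.rpow_pos_of_pos hS _), abs_of_pos hEpos]
  rw [habs]
  -- bound |G|
  have hdr : |(d:ℝ) * r / (1 - r ^ 2)| ≤ (d:ℝ) / (1 - r) := by
    rw [abs_of_nonneg (div_nonneg (mul_nonneg (Nat.cast_nonneg d) hr0.le) hS.le)]
    apply div_le_div₀ (Nat.cast_nonneg d) _ ht htS
    nlinarith [Nat.cast_nonneg (α := ℝ) d]
  have hb4 : 2 * |b| ≤ 2 * ‖x‖ ^ 2 + 4 := by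
    nlinarith [mul_le_mul_of_nonneg_left hBA hA]
  have hq'abs : |2 * (r * ‖x - y‖ ^ 2 - b * (1 - r) ^ 2) / (1 - r ^ 2) ^ 2|
      ≤ 2 * ‖x - y‖ ^ 2 / (1 - r) ^ 2 + (2 * ‖x‖ ^ 2 + 4) := by
    rw [abs_div, abs_of_pos (pow_pos hS 2), div_le_iff₀ (pow_pos hS 2)]
    have hts2 : (1 - r) ^ 2 ≤ (1 - r ^ 2) ^ 2 := by nlinarith
    have h1 : |2 * (r * ‖x - y‖ ^ 2 - b * (1 - r) ^ 2)|
        ≤ 2 * ‖x - y‖ ^ 2 + (2 * ‖x‖ ^ 2 + 4) * (1 - r) ^ 2 := by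
      rw [abs_le]
      constructor
      · nlinarith [mul_le_mul_of_nonneg_right (le_abs_self b) (sq_nonneg (1 - r)),
          mul_le_mul_of_nonneg_right hb4 (sq_nonneg (1 - r)),
          mul_nonneg (mul_nonneg hr0.le (sq_nonneg (‖x - y‖))) (by norm_num : (0:ℝ) ≤ 2),
          mul_nonneg ht.le (sq_nonneg ‖x - y‖)]
      · nlinarith [mul_le_mul_of_nonneg_right (neg_le_abs b) (sq_nonneg (1 - r)),
          mul_le_mul_of_nonneg_right hb4 (sq_nonneg (1 - r)),
          mul_nonneg ht.le (sq_nonneg ‖x - y‖)]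
    have h2 : 2 * ‖x - y‖ ^ 2 + (2 * ‖x‖ ^ 2 + 4) * (1 - r) ^ 2
        ≤ (2 * ‖x - y‖ ^ 2 / (1 - r) ^ 2 + (2 * ‖x‖ ^ 2 + 4)) * (1 - r ^ 2) ^ 2 := by
      have h3 : 2 * ‖x - y‖ ^ 2 / (1 - r) ^ 2 * (1 - r) ^ 2 = 2 * ‖x - y‖ ^ 2 := by
        field_simp
      have h4 : 2 * ‖x - y‖ ^ 2 / (1 - r) ^ 2 * (1 - r) ^ 2
          ≤ 2 * ‖x - y‖ ^ 2 / (1 - r) ^ 2 * (1 - r ^ 2) ^ 2 :=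
        mul_le_mul_of_nonneg_left hts2 (by positivity)
      nlinarith [hts2, sq_nonneg ‖x‖]
    linarith
  have hGabs : |G| ≤ (d:ℝ) / (1 - r) + 2 * ‖x - y‖ ^ 2 / (1 - r) ^ 2 + 2 * ‖x‖ ^ 2 + 4 := by
    rw [hG_def]
    calc |((d:ℝ) * r / (1 - r ^ 2)) - 2 * (r * ‖x - y‖ ^ 2 - b * (1 - r) ^ 2) / (1 - r ^ 2) ^ 2|
        ≤ |(d:ℝ) * r / (1 - r ^ 2)| + |2 * (r * ‖x - y‖ ^ 2 - b * (1 - r) ^ 2) / (1 - r ^ 2) ^ 2| := by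
          rw [sub_eq_add_neg]
          refine (abs_add_le _ _).trans ?_
          rw [abs_neg]
      _ ≤ (d:ℝ) / (1 - r) + (2 * ‖x - y‖ ^ 2 / (1 - r) ^ 2 + (2 * ‖x‖ ^ 2 + 4)) := by
          linarith
      _ = (d:ℝ) / (1 - r) + 2 * ‖x - y‖ ^ 2 / (1 - r) ^ 2 + 2 * ‖x‖ ^ 2 + 4 := by ring
  -- core bound
  have hcore := aux_core d ‖x‖ ‖y‖ ‖x - y‖ b r hA hB hu hbB huu hloc hr0 hr1
  have hGE : |G| * E ≤ 700 * ((d:ℝ) + 1) / (1 - r) * Real.exp (-‖x - y‖ ^ 2 / (4 * (1 - r))) := by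
    calc |G| * E ≤ ((d:ℝ) / (1 - r) + 2 * ‖x - y‖ ^ 2 / (1 - r) ^ 2 + 2 * ‖x‖ ^ 2 + 4) * E :=
          mul_le_mul_of_nonneg_right hGabs hEpos.le
      _ ≤ 700 * ((d:ℝ) + 1) / (1 - r) * Real.exp (-‖x - y‖ ^ 2 / (4 * (1 - r))) := by
          rw [hE_def]; exact hcore
  -- powers
  have hple : -(d:ℝ)/2 ≤ 0 := by
    have : (0:ℝ) ≤ (d:ℝ) := Nat.cast_nonneg d
    linarith
  have hpi1 : Real.pi ^ (-(d:ℝ)/2) ≤ 1 :=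
    Real.rpow_le_one_of_one_le_of_nonpos (by linarith [Real.pi_gt_three]) hple
  have hSp : (1 - r ^ 2) ^ (-(d:ℝ)/2) ≤ (1 - r) ^ (-(d:ℝ)/2) :=
    Real.rpow_le_rpow_of_nonpos ht htS hple
  have h1p : Real.pi ^ (-(d:ℝ)/2) * (1 - r ^ 2) ^ (-(d:ℝ)/2) ≤ 1 * (1 - r) ^ (-(d:ℝ)/2) :=
    mul_le_mul hpi1 hSp (Real.rpow_nonneg hS.le _) (by norm_num)
  have hfinal : Real.pi ^ (-(d:ℝ)/2) * (1 - r ^ 2) ^ (-(d:ℝ)/2) * (|G| * E)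
      ≤ (1 * (1 - r) ^ (-(d:ℝ)/2)) *
        (700 * ((d:ℝ) + 1) / (1 - r) * Real.exp (-‖x - y‖ ^ 2 / (4 * (1 - r)))) :=
    mul_le_mul h1p hGE (mul_nonneg (abs_nonneg G) hEpos.le)
      (by rw [one_mul]; exact Real.rpow_nonneg ht.le _)
  refine hfinal.trans (le_of_eq ?_)
  rw [Real.rpow_sub ht (-(d:ℝ)/2) 1, Real.rpow_one]
  ring

set_option maxHeartbeats 1000000 in
lemma aux_tbound (d : ℕ) (u t : ℝ) (hu : 0 < u) (ht : 0 < t) :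
    t ^ (-(d:ℝ)/2 - 1) * Real.exp (-u ^ 2 / (4 * t))
      ≤ ((Nat.factorial (d+1) : ℝ) + 1) * (4:ℝ) ^ ((d:ℝ)/2 + 1) * u ^ (-(d:ℝ) - 2) := by
  have he0 : (0:ℝ) ≤ (d:ℝ)/2 + 1 := by positivity
  have hv0 : 0 < u ^ 2 / (4 * t) := by positivity
  have hsup := aux_sup (d+1) ((d:ℝ)/2 + 1) he0
    (by push_cast; linarith [Nat.cast_nonneg (α := ℝ) d]) (u ^ 2 / (4 * t)) hv0.le
  -- rewrite v^e
  have hX : (0:ℝ) < u ^ ((d:ℝ) + 2) := Real.rpow_pos_of_pos hu _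
  have hY : (0:ℝ) < (4:ℝ) ^ ((d:ℝ)/2 + 1) := Real.rpow_pos_of_pos (by norm_num) _
  have hT : (0:ℝ) < t ^ ((d:ℝ)/2 + 1) := Real.rpow_pos_of_pos ht _
  have hu2e : ((u ^ 2 : ℝ)) ^ ((d:ℝ)/2 + 1) = u ^ ((d:ℝ) + 2) := by
    rw [← Real.rpow_natCast u 2, ← Real.rpow_mul hu.le]
    congr 1
    push_cast
    ring
  have hv_split : (u ^ 2 / (4 * t)) ^ ((d:ℝ)/2 + 1)
      = u ^ ((d:ℝ) + 2) * ((4:ℝ) ^ ((d:ℝ)/2 + 1))⁻¹ * (t ^ ((d:ℝ)/2 + 1))⁻¹ := by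
    rw [div_eq_mul_inv, Real.mul_rpow (by positivity) (by positivity),
      Real.inv_rpow (by positivity), Real.mul_rpow (by norm_num) ht.le, hu2e]
    rw [mul_inv]
    ring
  have hexp : Real.exp (-u ^ 2 / (4 * t)) = Real.exp (-(u ^ 2 / (4 * t))) := by rw [neg_div]
  have htneg : t ^ (-(d:ℝ)/2 - 1) = (t ^ ((d:ℝ)/2 + 1))⁻¹ := by
    rw [show -(d:ℝ)/2 - 1 = -((d:ℝ)/2 + 1) by ring, Real.rpow_neg ht.le]
  rw [hexp, htneg]
  -- goal: (t^e)⁻¹ * exp(-v) ≤ K * 4^e * u^(-d-2)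
  have hune : u ^ (-(d:ℝ) - 2) = (u ^ ((d:ℝ) + 2))⁻¹ := by
    rw [show -(d:ℝ) - 2 = -((d:ℝ) + 2) by ring, Real.rpow_neg hu.le]
  rw [hune]
  rw [hv_split] at hsup
  have hKpos : (0:ℝ) < (Nat.factorial (d+1) : ℝ) + 1 := by positivity
  -- multiply out: from hsup : X * Y⁻¹ * T⁻¹ * E ≤ K  derive  T⁻¹ * E ≤ K * Y * X⁻¹
  have hE : (0:ℝ) < Real.exp (-(u ^ 2 / (4 * t))) := Real.exp_pos _
  rw [← mul_le_mul_iff_of_pos_right (mul_pos hX (inv_pos.2 hY))]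
  calc (t ^ ((d:ℝ)/2 + 1))⁻¹ * Real.exp (-(u ^ 2 / (4 * t))) * (u ^ ((d:ℝ) + 2) * ((4:ℝ) ^ ((d:ℝ)/2 + 1))⁻¹)
      = u ^ ((d:ℝ) + 2) * ((4:ℝ) ^ ((d:ℝ)/2 + 1))⁻¹ * (t ^ ((d:ℝ)/2 + 1))⁻¹ *
        Real.exp (-(u ^ 2 / (4 * t))) := by ring
    _ ≤ (Nat.factorial (d+1) : ℝ) + 1 := hsup
    _ = ((Nat.factorial (d+1) : ℝ) + 1) * (4:ℝ) ^ ((d:ℝ)/2 + 1) * (u ^ ((d:ℝ) + 2))⁻¹ *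
        (u ^ ((d:ℝ) + 2) * ((4:ℝ) ^ ((d:ℝ)/2 + 1))⁻¹) := by
        field_simp

set_option maxHeartbeats 2000000 in
lemma aux_int (d : ℕ) (hd : 1 ≤ d) (u : ℝ) (hu0 : 0 < u) (hu2 : u ≤ 2) :
    (∫ r in Set.Ioo (0:ℝ) 1,
        (1 - r) ^ (-(d : ℝ) / 2 - 1) * Real.exp (-u ^ 2 / (4 * (1 - r))))
      ≤ ((((Nat.factorial (d+1)) : ℝ) + 1) * (4:ℝ) ^ ((d:ℝ)/2 + 1) + 2) * u ^ (-(d:ℝ)) := by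
  set K4 : ℝ := (((Nat.factorial (d+1)) : ℝ) + 1) * (4:ℝ) ^ ((d:ℝ)/2 + 1) with hK4_def
  have hK4pos : 0 < K4 := by rw [hK4_def]; positivity
  set Mu : ℝ := K4 * u ^ (-(d:ℝ) - 2) with hMu_def
  have hMupos : 0 < Mu := by
    rw [hMu_def]; exact mul_pos hK4pos (Real.rpow_pos_of_pos hu0 _)
  set ψ : ℝ → ℝ := fun r => (1 - r) ^ (-(d : ℝ) / 2 - 1) * Real.exp (-u ^ 2 / (4 * (1 - r)))
    with hψ_def
  have hψle : ∀ r ∈ Set.Ioo (0:ℝ) 1, ψ r ≤ Mu := by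
    intro r hr
    rw [hψ_def, hMu_def, hK4_def]
    exact aux_tbound d u (1 - r) hu0 (by linarith [hr.2])
  have hψnn : ∀ r ∈ Set.Ioo (0:ℝ) 1, 0 ≤ ψ r := by
    intro r hr
    rw [hψ_def]
    have h1 : (0:ℝ) < 1 - r := by linarith [hr.2]
    positivity
  have hψmeas : Measurable ψ := by
    rw [hψ_def]; fun_prop
  have hud0 : 0 < u ^ (-(d:ℝ)) := Real.rpow_pos_of_pos hu0 _
  have hψint : IntegrableOn ψ (Set.Ioo (0:ℝ) 1) volume := by
    apply Integrable.mono' (integrable_const Mu) hψmeas.aestronglyMeasurable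
    rw [ae_restrict_iff' measurableSet_Ioo]
    exact ae_of_all _ fun r hr => by
      rw [Real.norm_eq_abs, abs_of_nonneg (hψnn r hr)]
      exact hψle r hr
  have hconst_int : IntegrableOn (fun _ : ℝ => Mu) (Set.Ioo (0:ℝ) 1) volume :=
    integrableOn_const (by rw [Real.volume_Ioo]; exact ENNReal.ofReal_ne_top)
  rcases le_or_gt 1 u with hcase | hcase
  · -- u ≥ 1 : crude bound
    have h1 : (∫ r in Set.Ioo (0:ℝ) 1, ψ r) ≤ ∫ _ in Set.Ioo (0:ℝ) 1, Mu :=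
      setIntegral_mono_on hψint hconst_int measurableSet_Ioo hψle
    have h2 : (∫ _ in Set.Ioo (0:ℝ) 1, Mu) = Mu := by
      rw [setIntegral_const, measureReal_def, Real.volume_Ioo]
      norm_num
    have h3 : Mu ≤ K4 * u ^ (-(d:ℝ)) := by
      rw [hMu_def]
      apply mul_le_mul_of_nonneg_left _ hK4pos.le
      apply Real.rpow_le_rpow_of_exponent_le hcase
      linarith
    calc (∫ r in Set.Ioo (0:ℝ) 1, ψ r) ≤ Mu := h1.trans h2.le
      _ ≤ K4 * u ^ (-(d:ℝ)) := h3
      _ ≤ (K4 + 2) * u ^ (-(d:ℝ)) := by nlinarith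
  · -- u < 1 : split at r₀ = 1 - u²
    have hu1 : u ^ 2 < 1 := by nlinarith
    have hu20 : 0 < u ^ 2 := by positivity
    have h0r : (0:ℝ) < 1 - u ^ 2 := by linarith
    have hr1' : 1 - u ^ 2 < 1 := by linarith
    have hsplit : Set.Ioo (0:ℝ) 1 = Set.Ioo 0 (1 - u ^ 2) ∪ Set.Ico (1 - u ^ 2) 1 :=
      (Set.Ioo_union_Ico_eq_Ioo h0r hr1'.le).symm
    have hdisj : Disjoint (Set.Ioo (0:ℝ) (1 - u ^ 2)) (Set.Ico (1 - u ^ 2) 1) :=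
      Set.Ico_disjoint_Ico_same.mono_left Set.Ioo_subset_Ico_self
    have hint1 : IntegrableOn ψ (Set.Ioo (0:ℝ) (1 - u ^ 2)) volume :=
      hψint.mono_set (by rw [hsplit]; exact Set.subset_union_left)
    have hint2 : IntegrableOn ψ (Set.Ico (1 - u ^ 2) 1) volume :=
      hψint.mono_set (by rw [hsplit]; exact Set.subset_union_right)
    rw [hsplit, setIntegral_union hdisj measurableSet_Ico hint1 hint2]
    -- piece 2
    have hpc2 : (∫ r in Set.Ico (1 - u ^ 2) 1, ψ r) ≤ K4 * u ^ (-(d:ℝ)) := by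
      have h1 : (∫ r in Set.Ico (1 - u ^ 2) 1, ψ r) ≤ ∫ _ in Set.Ico (1 - u ^ 2) 1, Mu := by
        apply setIntegral_mono_on (hint2)
          (integrableOn_const (by rw [Real.volume_Ico]; exact ENNReal.ofReal_ne_top))
          measurableSet_Ico
        intro r hr
        exact hψle r ⟨by linarith [hr.1], hr.2⟩
      have h2 : (∫ _ in Set.Ico (1 - u ^ 2) 1, Mu) = u ^ 2 * Mu := by
        rw [setIntegral_const, measureReal_def, Real.volume_Ico, smul_eq_mul]
        congr 1
        rw [ENNReal.toReal_ofReal (by linarith)]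
        ring
      have h3 : u ^ 2 * Mu = K4 * u ^ (-(d:ℝ)) := by
        rw [hMu_def, ← Real.rpow_natCast u 2]
        rw [show u ^ ((2:ℕ):ℝ) * (K4 * u ^ (-(d:ℝ) - 2)) = K4 * (u ^ ((2:ℕ):ℝ) * u ^ (-(d:ℝ) - 2)) by ring,
          ← Real.rpow_add hu0]
        congr 1
        push_cast
        ring
      calc (∫ r in Set.Ico (1 - u ^ 2) 1, ψ r) ≤ u ^ 2 * Mu := h1.trans h2.le
        _ = K4 * u ^ (-(d:ℝ)) := h3
    -- piece 1
    have hpc1 : (∫ r in Set.Ioo (0:ℝ) (1 - u ^ 2), ψ r) ≤ 2 * u ^ (-(d:ℝ)) := by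
      have hcont : ContinuousOn (fun r : ℝ => (1 - r) ^ (-(d:ℝ)/2 - 1)) (Set.Icc 0 (1 - u ^ 2)) := by
        apply ContinuousOn.rpow_const ((by fun_prop : Continuous fun r:ℝ => 1 - r).continuousOn)
        intro r hr
        left
        have h8 : r ≤ 1 - u ^ 2 := hr.2
        have h9 : (0:ℝ) < 1 - r := by nlinarith
        exact h9.ne'
      have hintz : IntegrableOn (fun r : ℝ => (1 - r) ^ (-(d:ℝ)/2 - 1))
          (Set.Ioo (0:ℝ) (1 - u ^ 2)) volume :=
        (hcont.integrableOn_Icc).mono_set Set.Ioo_subset_Icc_self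
      have h1 : (∫ r in Set.Ioo (0:ℝ) (1 - u ^ 2), ψ r)
          ≤ ∫ r in Set.Ioo (0:ℝ) (1 - u ^ 2), (1 - r) ^ (-(d:ℝ)/2 - 1) := by
        apply setIntegral_mono_on hint1 hintz measurableSet_Ioo
        intro r hr
        rw [hψ_def]
        have h2 : 0 < 1 - r := by nlinarith [hr.2]
        have h3 : Real.exp (-u ^ 2 / (4 * (1 - r))) ≤ 1 := by
          calc Real.exp (-u ^ 2 / (4 * (1 - r))) ≤ Real.exp 0 := by
                apply Real.exp_le_exp.2
                rw [neg_div, neg_nonpos]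
                positivity
            _ = 1 := Real.exp_zero
        calc (1 - r) ^ (-(d:ℝ)/2 - 1) * Real.exp (-u ^ 2 / (4 * (1 - r)))
            ≤ (1 - r) ^ (-(d:ℝ)/2 - 1) * 1 :=
              mul_le_mul_of_nonneg_left h3 (Real.rpow_nonneg h2.le _)
          _ = (1 - r) ^ (-(d:ℝ)/2 - 1) := by ring
      have h4 : (∫ r in Set.Ioo (0:ℝ) (1 - u ^ 2), (1 - r) ^ (-(d:ℝ)/2 - 1))
          = ∫ s in (u ^ 2 : ℝ)..1, s ^ (-(d:ℝ)/2 - 1) := by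
        rw [← integral_Ioc_eq_integral_Ioo, ← intervalIntegral.integral_of_le h0r.le]
        rw [intervalIntegral.integral_comp_sub_left (fun s : ℝ => s ^ (-(d:ℝ)/2 - 1)) 1]
        norm_num
      have h5 : (∫ s in (u ^ 2 : ℝ)..1, s ^ (-(d:ℝ)/2 - 1))
          = (1 - (u ^ 2 : ℝ) ^ (-(d:ℝ)/2 - 1 + 1)) / (-(d:ℝ)/2 - 1 + 1) := by
        rw [integral_rpow]
        · rw [Real.one_rpow]
        · right
          constructor
          · have hd1 : (1:ℝ) ≤ (d:ℝ) := by exact_mod_cast hd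
            intro hcontra
            rw [show (-1:ℝ) = -1 from rfl] at hcontra
            nlinarith [hcontra]
          · exact Set.notMem_uIcc_of_lt hu20 one_pos
      have h6 : ((u ^ 2 : ℝ)) ^ (-(d:ℝ)/2 - 1 + 1) = u ^ (-(d:ℝ)) := by
        rw [← Real.rpow_natCast u 2, ← Real.rpow_mul hu0.le]
        congr 1
        push_cast
        ring
      have hud1 : (1:ℝ) ≤ u ^ (-(d:ℝ)) := by
        have := Real.rpow_le_rpow_of_exponent_ge hu0 hcase.le
          (by linarith [Nat.cast_nonneg (α := ℝ) d] : -(d:ℝ) ≤ 0)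
        rwa [Real.rpow_zero] at this
      have hd1 : (1:ℝ) ≤ (d:ℝ) := by exact_mod_cast hd
      have h7 : (1 - u ^ (-(d:ℝ))) / (-(d:ℝ)/2 - 1 + 1) ≤ 2 * u ^ (-(d:ℝ)) := by
        rw [div_le_iff_of_neg (by linarith : -(d:ℝ)/2 - 1 + 1 < 0)]
        nlinarith
      calc (∫ r in Set.Ioo (0:ℝ) (1 - u ^ 2), ψ r)
          ≤ (1 - (u ^ 2 : ℝ) ^ (-(d:ℝ)/2 - 1 + 1)) / (-(d:ℝ)/2 - 1 + 1) := by
            rw [← h5, ← h4]; exact h1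
        _ = (1 - u ^ (-(d:ℝ))) / (-(d:ℝ)/2 - 1 + 1) := by rw [h6]
        _ ≤ 2 * u ^ (-(d:ℝ)) := h7
    calc (∫ r in Set.Ioo (0:ℝ) (1 - u ^ 2), ψ r) + ∫ r in Set.Ico (1 - u ^ 2) 1, ψ r
        ≤ 2 * u ^ (-(d:ℝ)) + K4 * u ^ (-(d:ℝ)) := add_le_add hpc1 hpc2
      _ = (K4 + 2) * u ^ (-(d:ℝ)) := by ring


set_option maxHeartbeats 2000000 in
/-- For `(x,y)` in the local region `N₂` and `0 < r < 1`,
`|∂_r M_r(x,y)| ≤ C_d (1−r)^{−d/2−1} exp(−|x−y|²/(4(1−r)))`; consequently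
`∫_0^1 |∂_r M_r(x,y)| dr ≤ C_d |x−y|^{−d}` when moreover `x ≠ y`. -/
theorem stmt_11 (d : ℕ) (hd : 1 ≤ d) :
    ∃ C : ℝ, 0 < C ∧ ∀ x y : EuclideanSpace ℝ (Fin d),
      ‖x - y‖ ≤ 2 / (1 + ‖x‖ + ‖y‖) →
      (∀ r ∈ Set.Ioo (0 : ℝ) 1,
        |deriv (fun s : ℝ => Real.pi ^ (-(d : ℝ) / 2) *
            (1 - s ^ 2) ^ (-(d : ℝ) / 2) *
            Real.exp (-‖s • x - y‖ ^ 2 / (1 - s ^ 2))) r|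
          ≤ C * (1 - r) ^ (-(d : ℝ) / 2 - 1) *
              Real.exp (-‖x - y‖ ^ 2 / (4 * (1 - r)))) ∧
      (x ≠ y →
        ∫ r in Set.Ioo (0 : ℝ) 1,
          |deriv (fun s : ℝ => Real.pi ^ (-(d : ℝ) / 2) *
              (1 - s ^ 2) ^ (-(d : ℝ) / 2) *
              Real.exp (-‖s • x - y‖ ^ 2 / (1 - s ^ 2))) r|
          ≤ C * ‖x - y‖ ^ (-(d : ℝ))) := by
  set M : ℝ := (((Nat.factorial (d+1)) : ℝ) + 1) * (4:ℝ) ^ ((d:ℝ)/2 + 1) + 2 with hM_def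
  have hM1 : (1:ℝ) ≤ M := by
    rw [hM_def]
    have h1 : (0:ℝ) < (((Nat.factorial (d+1)) : ℝ) + 1) * (4:ℝ) ^ ((d:ℝ)/2 + 1) := by positivity
    linarith
  have hC7 : (0:ℝ) < 700 * ((d:ℝ) + 1) := by positivity
  refine ⟨700 * ((d:ℝ) + 1) * M, by positivity, ?_⟩
  intro x y hxy
  constructor
  · intro r hr
    obtain ⟨hr0, hr1⟩ := hr
    have ht : (0:ℝ) < 1 - r := by linarith
    calc |deriv (fun s : ℝ => Real.pi ^ (-(d : ℝ) / 2) * (1 - s ^ 2) ^ (-(d : ℝ) / 2) *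
            Real.exp (-‖s • x - y‖ ^ 2 / (1 - s ^ 2))) r|
        ≤ 700 * ((d:ℝ) + 1) * (1 - r) ^ (-(d : ℝ) / 2 - 1) *
            Real.exp (-‖x - y‖ ^ 2 / (4 * (1 - r))) := aux_point d x y hxy r hr0 hr1
      _ ≤ 700 * ((d:ℝ) + 1) * M * (1 - r) ^ (-(d : ℝ) / 2 - 1) *
            Real.exp (-‖x - y‖ ^ 2 / (4 * (1 - r))) := by
          apply mul_le_mul_of_nonneg_right _ (Real.exp_pos _).le
          apply mul_le_mul_of_nonneg_right _ (Real.rpow_nonneg ht.le _)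
          nlinarith
  · intro hne
    have hu0 : (0:ℝ) < ‖x - y‖ := by
      rw [norm_pos_iff]
      exact sub_ne_zero_of_ne hne
    have hA : (0:ℝ) ≤ ‖x‖ := norm_nonneg x
    have hB : (0:ℝ) ≤ ‖y‖ := norm_nonneg y
    have hD : (0:ℝ) < 1 + ‖x‖ + ‖y‖ := by linarith
    have hloc : ‖x - y‖ * (1 + ‖x‖ + ‖y‖) ≤ 2 := by
      rw [← le_div_iff₀ hD]; exact hxy
    have hu2 : ‖x - y‖ ≤ 2 := by nlinarith [mul_nonneg hu0.le (add_nonneg hA hB)]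
    set φ : ℝ → ℝ := fun r => |deriv (fun s : ℝ => Real.pi ^ (-(d : ℝ) / 2) *
        (1 - s ^ 2) ^ (-(d : ℝ) / 2) *
        Real.exp (-‖s • x - y‖ ^ 2 / (1 - s ^ 2))) r| with hφ_def
    set g : ℝ → ℝ := fun r => 700 * ((d:ℝ) + 1) *
        ((1 - r) ^ (-(d : ℝ) / 2 - 1) * Real.exp (-‖x - y‖ ^ 2 / (4 * (1 - r)))) with hg_def
    have hφmeas : Measurable φ := by
      rw [hφ_def]
      exact (measurable_deriv _).abs
    have hgmeas : Measurable g := by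
      rw [hg_def]; fun_prop
    have hφg : ∀ r ∈ Set.Ioo (0:ℝ) 1, φ r ≤ g r := by
      intro r hr
      rw [hφ_def, hg_def]
      have := aux_point d x y hxy r hr.1 hr.2
      calc |deriv (fun s : ℝ => Real.pi ^ (-(d : ℝ) / 2) * (1 - s ^ 2) ^ (-(d : ℝ) / 2) *
              Real.exp (-‖s • x - y‖ ^ 2 / (1 - s ^ 2))) r|
          ≤ 700 * ((d:ℝ) + 1) * (1 - r) ^ (-(d : ℝ) / 2 - 1) *
              Real.exp (-‖x - y‖ ^ 2 / (4 * (1 - r))) := this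
        _ = 700 * ((d:ℝ) + 1) * ((1 - r) ^ (-(d : ℝ) / 2 - 1) *
              Real.exp (-‖x - y‖ ^ 2 / (4 * (1 - r)))) := by ring
    have hgnn : ∀ r ∈ Set.Ioo (0:ℝ) 1, 0 ≤ g r := by
      intro r hr
      rw [hg_def]
      have h1 : (0:ℝ) < 1 - r := by linarith [hr.2]
      positivity
    have hgbd : ∀ r ∈ Set.Ioo (0:ℝ) 1, g r ≤ 700 * ((d:ℝ) + 1) *
        ((((Nat.factorial (d+1)) : ℝ) + 1) * (4:ℝ) ^ ((d:ℝ)/2 + 1) * ‖x - y‖ ^ (-(d:ℝ) - 2)) := by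
      intro r hr
      rw [hg_def]
      apply mul_le_mul_of_nonneg_left _ hC7.le
      exact aux_tbound d ‖x - y‖ (1 - r) hu0 (by linarith [hr.2])
    have hgint : IntegrableOn g (Set.Ioo (0:ℝ) 1) volume := by
      apply Integrable.mono' (integrable_const (700 * ((d:ℝ) + 1) *
        ((((Nat.factorial (d+1)) : ℝ) + 1) * (4:ℝ) ^ ((d:ℝ)/2 + 1) * ‖x - y‖ ^ (-(d:ℝ) - 2))))
        hgmeas.aestronglyMeasurable
      rw [ae_restrict_iff' measurableSet_Ioo]
      exact ae_of_all _ fun r hr => by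
        rw [Real.norm_eq_abs, abs_of_nonneg (hgnn r hr)]
        exact hgbd r hr
    have hφint : IntegrableOn φ (Set.Ioo (0:ℝ) 1) volume := by
      apply Integrable.mono' hgint hφmeas.aestronglyMeasurable
      rw [ae_restrict_iff' measurableSet_Ioo]
      exact ae_of_all _ fun r hr => by
        rw [hφ_def, Real.norm_eq_abs, abs_abs]
        exact hφg r hr
    have hmono : (∫ r in Set.Ioo (0:ℝ) 1, φ r) ≤ ∫ r in Set.Ioo (0:ℝ) 1, g r := by
      apply integral_mono_ae hφint hgint
      rw [Filter.EventuallyLE, ae_restrict_iff' measurableSet_Ioo]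
      exact ae_of_all _ fun r hr => hφg r hr
    have hgval : (∫ r in Set.Ioo (0:ℝ) 1, g r) = 700 * ((d:ℝ) + 1) *
        ∫ r in Set.Ioo (0:ℝ) 1,
          (1 - r) ^ (-(d : ℝ) / 2 - 1) * Real.exp (-‖x - y‖ ^ 2 / (4 * (1 - r))) := by
      rw [hg_def, integral_const_mul]
    calc (∫ r in Set.Ioo (0:ℝ) 1, φ r) ≤ ∫ r in Set.Ioo (0:ℝ) 1, g r := hmono
      _ = 700 * ((d:ℝ) + 1) * ∫ r in Set.Ioo (0:ℝ) 1,
            (1 - r) ^ (-(d : ℝ) / 2 - 1) * Real.exp (-‖x - y‖ ^ 2 / (4 * (1 - r))) := hgval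
      _ ≤ 700 * ((d:ℝ) + 1) * (M * ‖x - y‖ ^ (-(d:ℝ))) := by
          apply mul_le_mul_of_nonneg_left _ hC7.le
          rw [hM_def]
          exact aux_int d hd ‖x - y‖ hu0 hu2
      _ = 700 * ((d:ℝ) + 1) * M * ‖x - y‖ ^ (-(d:ℝ)) := by ring
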